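/- arXiv:2510.23012 — 2 statements merged into one kernel-verified Lean document; each statement's English description precedes it below -/
import Mathlib

section
/- Let n ≥ 2, λ > 0, and 1 ≤ p ≤ ∞. Then the Lipschitz constant of the softmax σ_λ with respect to the ℓ_p norm is exactly λ/2: that is, sup over pairs x ≠ y in ℝⁿ of ‖σ_λ(x) − σ_λ(y)‖_p / ‖x − y‖_p equals λ/2. -/
open scoped ENNReal BigOperators

/-- The softmax function with inverse temperature `lam`. -/
noncomputable def softmax {n : ℕ} (lam : ℝ) (x : Fin n → ℝ) : Fin n → ℝ :=
  fun i => Real.exp (lam * x i) / ∑ j, Real.exp (lam * x j)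

/-- The ℓ_p norm on `Fin n → ℝ`, for `p ∈ [1, ∞]`. -/
noncomputable def lpNorm {n : ℕ} (p : ℝ≥0∞) (x : Fin n → ℝ) : ℝ :=
  if p = ⊤ then ⨆ i, |x i| else (∑ i, |x i| ^ p.toReal) ^ (1 / p.toReal)

/-- The ℓ_p-induced operator norm of a matrix. -/
noncomputable def opNorm {n m : ℕ} (p : ℝ≥0∞) (A : Matrix (Fin n) (Fin m) ℝ) : ℝ :=
  ⨆ v : {v : Fin m → ℝ // v ≠ 0}, lpNorm p (A.mulVec v.val) / lpNorm p v.val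

/-- The matrix `Diag(s) - s sᵀ` (Jacobian of softmax with `lam = 1` at a point with value `s`). -/
noncomputable def softmaxJac {n : ℕ} (s : Fin n → ℝ) : Matrix (Fin n) (Fin n) ℝ :=
  Matrix.diagonal s - Matrix.vecMulVec s s

/-- The open (interior of the) probability simplex. -/
def openSimplex (n : ℕ) : Set (Fin n → ℝ) :=
  {u | (∀ i, 0 < u i) ∧ ∑ i, u i = 1}

/-- The (closed) probability simplex. -/
def probSimplex (n : ℕ) : Set (Fin n → ℝ) :=
  {u | (∀ i, 0 ≤ u i) ∧ ∑ i, u i = 1}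


lemma toReal_pos_of_ne_top {p : ℝ≥0∞} (hp : 1 ≤ p) (h : p ≠ ⊤) : 0 < p.toReal :=
  ENNReal.toReal_pos (fun h0 => by simp [h0] at hp) h

lemma lpNorm_eq_norm {n : ℕ} (p : ℝ≥0∞) [Fact (1 ≤ p)] (x : Fin n → ℝ) :
    lpNorm p x = ‖((WithLp.equiv p (Fin n → ℝ)).symm x : PiLp p (fun _ : Fin n => ℝ))‖ := by
  by_cases hp : p = ⊤
  · subst hp
    rw [lpNorm, if_pos rfl, PiLp.norm_eq_ciSup]
    rfl
  · rw [lpNorm, if_neg hp, PiLp.norm_eq_sum (toReal_pos_of_ne_top Fact.out hp)]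
    rfl

lemma lpNorm_mono {n : ℕ} {p : ℝ≥0∞} (hp : 1 ≤ p) {w u : Fin n → ℝ}
    (h : ∀ i, |w i| ≤ |u i|) : lpNorm p w ≤ lpNorm p u := by
  by_cases htop : p = ⊤
  · subst htop
    rw [lpNorm, if_pos rfl, lpNorm, if_pos rfl]
    exact ciSup_mono (Set.Finite.bddAbove (Set.finite_range _)) h
  · have hr : 0 < p.toReal := toReal_pos_of_ne_top hp htop
    rw [lpNorm, if_neg htop, lpNorm, if_neg htop]
    apply Real.rpow_le_rpow (Finset.sum_nonneg fun i _ => Real.rpow_nonneg (abs_nonneg _) _)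
      (Finset.sum_le_sum fun i _ => Real.rpow_le_rpow (abs_nonneg _) (h i) hr.le)
      (by positivity)

lemma schur_bound {n : ℕ} {p : ℝ≥0∞} (hp : 1 ≤ p) (T : Fin n → Fin n → ℝ)
    (hT : ∀ i j, 0 ≤ T i j) {K : ℝ} (hK : 0 ≤ K)
    (hrow : ∀ i, ∑ j, T i j ≤ K) (hcol : ∀ j, ∑ i, T i j ≤ K) (v : Fin n → ℝ) :
    lpNorm p (fun i => ∑ j, T i j * |v j|) ≤ K * lpNorm p v := by
  by_cases htop : p = ⊤
  · subst htop
    rw [lpNorm, if_pos rfl, lpNorm, if_pos rfl]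
    have hS : 0 ≤ ⨆ i, |v i| := Real.iSup_nonneg fun i => abs_nonneg _
    apply Real.iSup_le _ (by positivity)
    intro i
    rw [abs_of_nonneg (Finset.sum_nonneg fun j _ => mul_nonneg (hT i j) (abs_nonneg _))]
    calc ∑ j, T i j * |v j| ≤ ∑ j, T i j * (⨆ k, |v k|) :=
          Finset.sum_le_sum fun j _ => mul_le_mul_of_nonneg_left
            (le_ciSup (f := fun k => |v k|) (Set.Finite.bddAbove (Set.finite_range _)) j) (hT i j)
      _ = (∑ j, T i j) * (⨆ k, |v k|) := by rw [Finset.sum_mul]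
      _ ≤ K * ⨆ k, |v k| := mul_le_mul_of_nonneg_right (hrow i) hS
  · have hr : 0 < p.toReal := toReal_pos_of_ne_top hp htop
    have hr1 : 1 ≤ p.toReal := by
      rw [← ENNReal.toReal_one]; exact ENNReal.toReal_mono htop hp
    set r := p.toReal
    rw [lpNorm, if_neg htop, lpNorm, if_neg htop]
    have key : ∀ i, (abs (∑ j, T i j * |v j|)) ^ r ≤ K ^ (r - 1) * ∑ j, T i j * |v j| ^ r := by
      intro i
      rw [abs_of_nonneg (Finset.sum_nonneg fun j _ => mul_nonneg (hT i j) (abs_nonneg _))]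
      set R := ∑ j, T i j with hR
      rcases eq_or_lt_of_le (Finset.sum_nonneg fun j (_ : j ∈ Finset.univ) => hT i j) with h0 | h0
      · have : ∀ j, T i j = 0 := by
          intro j
          have := (Finset.sum_eq_zero_iff_of_nonneg (fun j _ => hT i j)).1 h0.symm
          exact this j (Finset.mem_univ j)
        simp only [this, zero_mul, Finset.sum_const_zero]
        rw [Real.zero_rpow hr.ne']
        positivity
      · have hRK : R ≤ K := hrow i
        have jensen := Real.rpow_arith_mean_le_arith_mean_rpow Finset.univ
          (fun j => T i j / R) (fun j => |v j|)
          (fun j _ => div_nonneg (hT i j) h0.le)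
          (by rw [← Finset.sum_div, div_self h0.ne'])
          (fun j _ => abs_nonneg _) hr1
        have e1 : ∑ j, (T i j / R) * |v j| = (∑ j, T i j * |v j|) / R := by
          rw [Finset.sum_div]; congr 1; ext j; ring
        have e2 : ∑ j, (T i j / R) * |v j| ^ r = (∑ j, T i j * |v j| ^ r) / R := by
          rw [Finset.sum_div]; congr 1; ext j; ring
        rw [e1, e2] at jensen
        have hA : 0 ≤ ∑ j, T i j * |v j| := Finset.sum_nonneg fun j _ => mul_nonneg (hT i j) (abs_nonneg _)
        have hB : 0 ≤ ∑ j, T i j * |v j| ^ r := Finset.sum_nonneg fun j _ => mul_nonneg (hT i j) (Real.rpow_nonneg (abs_nonneg _) _)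
        calc (∑ j, T i j * |v j|) ^ r = (R * ((∑ j, T i j * |v j|) / R)) ^ r := by
              rw [mul_div_cancel₀ _ h0.ne']
          _ = R ^ r * ((∑ j, T i j * |v j|) / R) ^ r := Real.mul_rpow h0.le (by positivity)
          _ ≤ R ^ r * ((∑ j, T i j * |v j| ^ r) / R) := mul_le_mul_of_nonneg_left jensen (Real.rpow_nonneg h0.le _)
          _ = R ^ (r - 1) * ∑ j, T i j * |v j| ^ r := by
              rw [Real.rpow_sub_one h0.ne']; ring
          _ ≤ K ^ (r - 1) * ∑ j, T i j * |v j| ^ r :=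
              mul_le_mul_of_nonneg_right (Real.rpow_le_rpow h0.le hRK (by linarith)) hB
    calc (∑ i, (abs (∑ j, T i j * |v j|)) ^ r) ^ (1 / r)
        ≤ (∑ i, K ^ (r - 1) * ∑ j, T i j * |v j| ^ r) ^ (1 / r) := by
          apply Real.rpow_le_rpow (Finset.sum_nonneg fun i _ => Real.rpow_nonneg (abs_nonneg _) _)
            (Finset.sum_le_sum fun i _ => key i) (by positivity)
      _ ≤ (K ^ r * ∑ j, |v j| ^ r) ^ (1 / r) := by
          apply Real.rpow_le_rpow
          · exact Finset.sum_nonneg fun i _ => mul_nonneg (Real.rpow_nonneg hK _)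
              (Finset.sum_nonneg fun j _ => mul_nonneg (hT i j) (Real.rpow_nonneg (abs_nonneg _) _))
          · rw [← Finset.mul_sum, Finset.sum_comm]
            have : ∀ j, ∑ i, T i j * |v j| ^ r ≤ K * |v j| ^ r := by
              intro j
              rw [← Finset.sum_mul]
              exact mul_le_mul_of_nonneg_right (hcol j) (Real.rpow_nonneg (abs_nonneg _) _)
            calc K ^ (r - 1) * ∑ j, ∑ i, T i j * |v j| ^ r
                ≤ K ^ (r - 1) * ∑ j, K * |v j| ^ r :=
                  mul_le_mul_of_nonneg_left (Finset.sum_le_sum fun j _ => this j) (Real.rpow_nonneg hK _)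
              _ = K ^ (r - 1) * K * ∑ j, |v j| ^ r := by rw [← Finset.mul_sum]; ring
              _ = K ^ r * ∑ j, |v j| ^ r := by
                  rcases eq_or_lt_of_le hK with h0 | h0
                  · rcases eq_or_ne r 1 with hr1' | hr1'
                    · simp [← h0, hr1']
                    · rw [← h0, Real.zero_rpow hr.ne', Real.zero_rpow (by
                        intro h; apply hr1'; linarith [sub_eq_zero.mp h])]
                      ring
                  · rw [Real.rpow_sub_one h0.ne', div_mul_cancel₀ _ h0.ne']
          · positivity
      _ = K * (∑ j, |v j| ^ r) ^ (1 / r) := by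
          rw [Real.mul_rpow (Real.rpow_nonneg hK _) (Finset.sum_nonneg fun j _ => Real.rpow_nonneg (abs_nonneg _) _),
            ← Real.rpow_mul hK, mul_one_div, div_self hr.ne', Real.rpow_one]
          

lemma jac_bound {n : ℕ} {p : ℝ≥0∞} (hp : 1 ≤ p) {lam : ℝ} (hlam : 0 < lam)
    {s : Fin n → ℝ} (hs0 : ∀ i, 0 ≤ s i) (hs1 : ∑ i, s i = 1) (v : Fin n → ℝ) :
    lpNorm p (fun i => lam * (s i * (v i - ∑ j, s j * v j))) ≤ lam / 2 * lpNorm p v := by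
  have hsle : ∀ i, s i ≤ 1 := fun i =>
    (Finset.single_le_sum (fun j _ => hs0 j) (Finset.mem_univ i)).trans_eq hs1
  set T : Fin n → Fin n → ℝ :=
    fun i j => if i = j then lam * (s i * (1 - s i)) else lam * (s i * s j) with hTdef
  have hTnn : ∀ i j, 0 ≤ T i j := by
    intro i j
    simp only [hTdef]
    split_ifs
    · exact mul_nonneg hlam.le (mul_nonneg (hs0 i) (by linarith [hsle i]))
    · have := hs0 i; have := hs0 j; positivity
  have herase : ∀ i, ∑ j ∈ Finset.univ.erase i, s j = 1 - s i := by
    intro i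
    have := Finset.sum_erase_add Finset.univ s (Finset.mem_univ i)
    linarith [this.symm ▸ hs1]
  have hrow : ∀ i, ∑ j, T i j ≤ lam / 2 := by
    intro i
    rw [← Finset.sum_erase_add _ _ (Finset.mem_univ i)]
    have e1 : ∑ j ∈ Finset.univ.erase i, T i j = lam * (s i * (1 - s i)) := by
      rw [Finset.sum_congr rfl (fun j hj => by
        simp only [hTdef]; rw [if_neg (Ne.symm (Finset.ne_of_mem_erase hj))])]
      rw [← Finset.mul_sum, ← Finset.mul_sum, herase i]
    rw [e1]
    simp only [hTdef, if_pos rfl]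
    nlinarith [sq_nonneg (2 * s i - 1), hlam.le, mul_nonneg hlam.le (sq_nonneg (2 * s i - 1))]
  have hcol : ∀ j, ∑ i, T i j ≤ lam / 2 := by
    intro j
    rw [← Finset.sum_erase_add _ _ (Finset.mem_univ j)]
    have e1 : ∑ i ∈ Finset.univ.erase j, T i j = lam * (s j * (1 - s j)) := by
      rw [Finset.sum_congr rfl (fun i hi => by
        simp only [hTdef]; rw [if_neg (Finset.ne_of_mem_erase hi)])]
      have : ∑ i ∈ Finset.univ.erase j, lam * (s i * s j) = lam * s j * ∑ i ∈ Finset.univ.erase j, s i := by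
        rw [Finset.mul_sum]; congr 1; ext i; ring
      rw [this, herase j]; ring
    rw [e1]
    simp only [hTdef, if_pos rfl]
    nlinarith [sq_nonneg (2 * s j - 1), hlam.le, mul_nonneg hlam.le (sq_nonneg (2 * s j - 1))]
  have habs : ∀ i, |lam * (s i * (v i - ∑ j, s j * v j))| ≤ ∑ j, T i j * |v j| := by
    intro i
    have em : v i - ∑ j, s j * v j = (1 - s i) * v i - ∑ j ∈ Finset.univ.erase i, s j * v j := by
      rw [← Finset.sum_erase_add _ _ (Finset.mem_univ i)]; ring
    have eT : ∑ j, T i j * |v j|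
        = lam * (s i * (1 - s i)) * |v i| + ∑ j ∈ Finset.univ.erase i, lam * (s i * s j) * |v j| := by
      rw [← Finset.sum_erase_add _ (fun j => T i j * |v j|) (Finset.mem_univ i)]
      simp only [hTdef, if_pos rfl]
      rw [add_comm]
      congr 1
      refine Finset.sum_congr rfl (fun j hj => ?_)
      rw [if_neg (Ne.symm (Finset.ne_of_mem_erase hj))]
    rw [em, eT, abs_mul, abs_mul, abs_of_nonneg hlam.le, abs_of_nonneg (hs0 i)]
    have h1 : |(1 - s i) * v i - ∑ j ∈ Finset.univ.erase i, s j * v j|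
        ≤ (1 - s i) * |v i| + ∑ j ∈ Finset.univ.erase i, s j * |v j| := by
      refine (abs_sub _ _).trans ?_
      gcongr
      · rw [abs_mul, abs_of_nonneg (by linarith [hsle i])]
      · refine (Finset.abs_sum_le_sum_abs _ _).trans ?_
        refine Finset.sum_le_sum (fun j _ => ?_)
        rw [abs_mul, abs_of_nonneg (hs0 j)]
    calc lam * (s i * |(1 - s i) * v i - ∑ j ∈ Finset.univ.erase i, s j * v j|)
        ≤ lam * (s i * ((1 - s i) * |v i| + ∑ j ∈ Finset.univ.erase i, s j * |v j|)) := by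
          have := hs0 i
          gcongr
      _ = lam * (s i * (1 - s i)) * |v i| + ∑ j ∈ Finset.univ.erase i, lam * (s i * s j) * |v j| := by
          have hsplit : ∀ A B : ℝ, lam * (s i * (A + B)) = lam * (s i * A) + lam * (s i * B) :=
            fun A B => by ring
          rw [hsplit, Finset.mul_sum, Finset.mul_sum]
          congr 1
          · ring
          · exact Finset.sum_congr rfl fun j hj => by ring
  have hmono := lpNorm_mono (w := fun i => lam * (s i * (v i - ∑ j, s j * v j)))
      (u := fun i => ∑ j, T i j * |v j|) hp (fun i => by
    rw [abs_of_nonneg (Finset.sum_nonneg fun j _ => mul_nonneg (hTnn i j) (abs_nonneg _))]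
    exact habs i)
  exact hmono.trans (schur_bound hp T hTnn (by positivity) hrow hcol v)


lemma sum_exp_pos {n : ℕ} [NeZero n] (lam : ℝ) (x : Fin n → ℝ) :
    0 < ∑ j, Real.exp (lam * x j) :=
  Finset.sum_pos (fun j _ => Real.exp_pos _) ⟨0, Finset.mem_univ 0⟩

noncomputable def smJac {n : ℕ} (lam : ℝ) (s : Fin n → ℝ) : (Fin n → ℝ) →L[ℝ] (Fin n → ℝ) :=
  ContinuousLinearMap.pi fun i =>
    lam • (s i • (ContinuousLinearMap.proj i - ∑ j, s j • ContinuousLinearMap.proj j))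

lemma smJac_apply {n : ℕ} (lam : ℝ) (s : Fin n → ℝ) (v : Fin n → ℝ) (i : Fin n) :
    smJac lam s v i = lam * (s i * (v i - ∑ j, s j * v j)) := by
  simp [smJac, ContinuousLinearMap.proj]

lemma hasFDerivAt_softmax {n : ℕ} [NeZero n] (lam : ℝ) (x : Fin n → ℝ) :
    HasFDerivAt (softmax lam) (smJac lam (softmax lam x)) x := by
  have hZ0 : (0:ℝ) < ∑ j, Real.exp (lam * x j) := sum_exp_pos lam x
  have hN : ∀ i : Fin n, HasFDerivAt (fun x : Fin n → ℝ => Real.exp (lam * x i))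
      ((Real.exp (lam * x i) • (lam • ContinuousLinearMap.proj i) : (Fin n → ℝ) →L[ℝ] ℝ)) x := by
    intro i
    have hl : HasFDerivAt (fun x : Fin n → ℝ => lam * x i)
        (lam • ContinuousLinearMap.proj i : (Fin n → ℝ) →L[ℝ] ℝ) x := (hasFDerivAt_apply (𝕜 := ℝ) (F' := fun _ : Fin n => ℝ) i x).const_mul lam
    exact (Real.hasDerivAt_exp (lam * x i)).comp_hasFDerivAt x hl
  have hZ : HasFDerivAt (fun x : Fin n → ℝ => ∑ j, Real.exp (lam * x j))
      (∑ j, Real.exp (lam * x j) • (lam • ContinuousLinearMap.proj j) : (Fin n → ℝ) →L[ℝ] ℝ) x :=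
    HasFDerivAt.fun_sum (fun j _ => hN j)
  rw [show softmax lam = fun x (i : Fin n) => Real.exp (lam * x i) / ∑ j, Real.exp (lam * x j) from rfl]
  rw [smJac]
  apply hasFDerivAt_pi.2
  intro i
  have hinv := (hasDerivAt_inv hZ0.ne').comp_hasFDerivAt x hZ
  have hdiv := (hN i).fun_mul hinv
  have heq : (fun x : Fin n → ℝ => Real.exp (lam * x i) / ∑ j, Real.exp (lam * x j))
      = fun x : Fin n → ℝ => Real.exp (lam * x i) * (∑ j, Real.exp (lam * x j))⁻¹ := by
    funext y; rw [div_eq_mul_inv]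
  rw [heq]
  refine hdiv.congr_fderiv (Eq.symm ?_)
  apply ContinuousLinearMap.ext
  intro v
  simp only [ContinuousLinearMap.add_apply, ContinuousLinearMap.sub_apply, ContinuousLinearMap.smul_apply,
    ContinuousLinearMap.coe_sum', Finset.sum_apply, ContinuousLinearMap.proj_apply,
    smul_eq_mul, Function.comp_apply, Function.comp, softmax]
  set Z := ∑ j, Real.exp (lam * x j) with hZdef
  have hZ0' : Z ≠ 0 := hZ0.ne'
  have hsum : ∑ j, Real.exp (lam * x j) / Z * v j = (∑ j, Real.exp (lam * x j) * v j) / Z := by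
    rw [Finset.sum_div]
    exact Finset.sum_congr rfl fun j _ => by ring
  have h3 : ∑ j, Real.exp (lam * x j) * (lam * v j) = lam * ∑ j, Real.exp (lam * x j) * v j := by
    rw [Finset.mul_sum]; exact Finset.sum_congr rfl fun j _ => by ring
  rw [hsum, h3]
  field_simp
  ring

lemma softmax_pos {n : ℕ} [NeZero n] (lam : ℝ) (x : Fin n → ℝ) (i : Fin n) :
    0 < softmax lam x i :=
  div_pos (Real.exp_pos _) (sum_exp_pos lam x)

lemma softmax_sum_one {n : ℕ} [NeZero n] (lam : ℝ) (x : Fin n → ℝ) :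
    ∑ i, softmax lam x i = 1 := by
  simp only [softmax]
  rw [← Finset.sum_div, div_self (sum_exp_pos lam x).ne']

lemma softmax_lip {n : ℕ} [NeZero n] {lam : ℝ} (hlam : 0 < lam) {p : ℝ≥0∞} (hp : 1 ≤ p)
    (x y : Fin n → ℝ) :
    lpNorm p (softmax lam x - softmax lam y) ≤ lam / 2 * lpNorm p (x - y) := by
  haveI : Fact (1 ≤ p) := ⟨hp⟩
  set E := PiLp p (fun _ : Fin n => ℝ) with hE
  let e : E ≃L[ℝ] (Fin n → ℝ) := PiLp.continuousLinearEquiv p ℝ (fun _ : Fin n => ℝ)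
  set f : E → E := fun u => e.symm (softmax lam (e u)) with hf
  set f' : E → E →L[ℝ] E := fun u =>
    ((e.symm : (Fin n → ℝ) →L[ℝ] E).comp (smJac lam (softmax lam (e u)))).comp
      (e : E →L[ℝ] (Fin n → ℝ)) with hf'
  have hderiv : ∀ u : E, HasFDerivAt f (f' u) u := by
    intro u
    have h1 : HasFDerivAt (softmax lam) (smJac lam (softmax lam (e u))) (e u) :=
      hasFDerivAt_softmax lam (e u)
    have h2 := h1.comp u (e.hasFDerivAt)
    exact ((e.symm : (Fin n → ℝ) →L[ℝ] E).hasFDerivAt.comp u h2)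
  have hbound : ∀ u : E, ‖f' u‖ ≤ lam / 2 := by
    intro u
    apply ContinuousLinearMap.opNorm_le_bound _ (by positivity)
    intro v
    have hs0 : ∀ i, 0 ≤ softmax lam (e u) i := fun i => (softmax_pos lam (e u) i).le
    have hs1 : ∑ i, softmax lam (e u) i = 1 := softmax_sum_one lam (e u)
    have happ : f' u v = (WithLp.equiv p (Fin n → ℝ)).symm (smJac lam (softmax lam (e u)) (e v)) := rfl
    rw [happ, ← lpNorm_eq_norm]
    have hv : ‖v‖ = lpNorm p (e v) := by rw [lpNorm_eq_norm]; rfl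
    rw [hv]
    have : (fun i => smJac lam (softmax lam (e u)) (e v) i)
        = fun i => lam * (softmax lam (e u) i * ((e v) i - ∑ j, softmax lam (e u) j * (e v) j)) := by
      funext i; exact smJac_apply _ _ _ i
    calc lpNorm p (smJac lam (softmax lam (e u)) (e v))
        = lpNorm p (fun i => lam * (softmax lam (e u) i * ((e v) i - ∑ j, softmax lam (e u) j * (e v) j))) := by
          rw [← this]
      _ ≤ lam / 2 * lpNorm p (e v) := jac_bound hp hlam hs0 hs1 (e v)
  have hmvt := Convex.norm_image_sub_le_of_norm_hasFDerivWithin_le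
    (f := f) (f' := f') (C := lam / 2) (s := (Set.univ : Set E))
    (fun u _ => (hderiv u).hasFDerivWithinAt) (fun u _ => hbound u) convex_univ
    (Set.mem_univ ((WithLp.equiv p (Fin n → ℝ)).symm y))
    (Set.mem_univ ((WithLp.equiv p (Fin n → ℝ)).symm x))
  have hfx : f ((WithLp.equiv p (Fin n → ℝ)).symm x) = (WithLp.equiv p (Fin n → ℝ)).symm (softmax lam x) := rfl
  have hfy : f ((WithLp.equiv p (Fin n → ℝ)).symm y) = (WithLp.equiv p (Fin n → ℝ)).symm (softmax lam y) := rfl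
  rw [hfx, hfy] at hmvt
  have e1 : (WithLp.equiv p (Fin n → ℝ)).symm (softmax lam x) - (WithLp.equiv p (Fin n → ℝ)).symm (softmax lam y)
      = (WithLp.equiv p (Fin n → ℝ)).symm (softmax lam x - softmax lam y) := rfl
  have e2 : (WithLp.equiv p (Fin n → ℝ)).symm x - (WithLp.equiv p (Fin n → ℝ)).symm y
      = (WithLp.equiv p (Fin n → ℝ)).symm (x - y) := rfl
  rw [e1, e2] at hmvt
  rw [lpNorm_eq_norm, lpNorm_eq_norm]
  exact hmvt

lemma fin_zero_ne_one {n : ℕ} [NeZero n] (hn : 2 ≤ n) : (0 : Fin n) ≠ 1 := by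
  intro h
  have h0 : ((0 : Fin n) : ℕ) = 0 := rfl
  have h1 : ((1 : Fin n) : ℕ) = 1 % n := Fin.val_one' n
  rw [Nat.mod_eq_of_lt (by omega)] at h1
  rw [h] at h0
  omega

lemma sum_ite01 {n : ℕ} [NeZero n] (hn : 2 ≤ n) (a b c : ℝ) :
    ∑ j : Fin n, (if j = 0 then a else if j = 1 then b else c)
      = a + b + ((n - 2 : ℕ) : ℝ) * c := by
  have h01 : (0 : Fin n) ≠ 1 := fin_zero_ne_one hn
  have hmem1 : (1 : Fin n) ∈ Finset.univ.erase (0 : Fin n) :=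
    Finset.mem_erase.2 ⟨h01.symm, Finset.mem_univ _⟩
  rw [← Finset.sum_erase_add _ _ (Finset.mem_univ (0 : Fin n)), if_pos rfl]
  have e1 : ∑ j ∈ Finset.univ.erase (0 : Fin n), (if j = 0 then a else if j = 1 then b else c)
      = ∑ j ∈ Finset.univ.erase (0 : Fin n), (if j = 1 then b else c) :=
    Finset.sum_congr rfl fun j hj => by rw [if_neg (Finset.ne_of_mem_erase hj)]
  rw [e1, ← Finset.sum_erase_add _ _ hmem1, if_pos rfl]
  have e2 : ∑ j ∈ (Finset.univ.erase (0 : Fin n)).erase 1, (if j = 1 then b else c)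
      = ∑ j ∈ (Finset.univ.erase (0 : Fin n)).erase 1, c :=
    Finset.sum_congr rfl fun j hj => by rw [if_neg (Finset.ne_of_mem_erase hj)]
  rw [e2, Finset.sum_const, nsmul_eq_mul]
  have hcard : ((Finset.univ.erase (0 : Fin n)).erase 1).card = n - 2 := by
    rw [Finset.card_erase_of_mem hmem1, Finset.card_erase_of_mem (Finset.mem_univ _),
      Finset.card_univ, Fintype.card_fin]
    omega
  rw [hcard]
  ring

lemma lpNorm_pair {n : ℕ} [NeZero n] (hn : 2 ≤ n) (p : ℝ≥0∞) (hp : 1 ≤ p) {a : ℝ} (ha : 0 ≤ a) :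
    lpNorm p (fun i : Fin n => if i = 0 then a else if i = 1 then -a else 0)
      = (if p = ⊤ then 1 else 2 ^ (1 / p.toReal)) * a := by
  have habs : ∀ i : Fin n, |if i = 0 then a else if i = 1 then -a else (0:ℝ)|
      = if i = 0 then a else if i = 1 then a else 0 := by
    intro i; split_ifs <;> simp [abs_of_nonneg ha]
  by_cases htop : p = ⊤
  · subst htop
    rw [lpNorm, if_pos rfl, if_pos rfl, one_mul]
    apply le_antisymm
    · apply Real.iSup_le _ ha
      intro i
      rw [habs]
      split_ifs <;> simp [ha]
    · have := le_ciSup (f := fun i : Fin n => |if i = 0 then a else if i = 1 then -a else (0:ℝ)|)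
        (Set.Finite.bddAbove (Set.finite_range _)) 0
      simpa [habs, abs_of_nonneg ha] using this
  · have hr : 0 < p.toReal := toReal_pos_of_ne_top hp htop
    rw [lpNorm, if_neg htop, if_neg htop]
    have e1 : ∑ i : Fin n, |if i = 0 then a else if i = 1 then -a else (0:ℝ)| ^ p.toReal
        = ∑ i : Fin n, (if i = 0 then a ^ p.toReal else if i = 1 then a ^ p.toReal else 0) := by
      refine Finset.sum_congr rfl fun i _ => ?_
      rw [habs]
      split_ifs <;> simp [Real.zero_rpow hr.ne']
    rw [e1, sum_ite01 hn, mul_zero, add_zero]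
    have : a ^ p.toReal + a ^ p.toReal = 2 * a ^ p.toReal := by ring
    rw [this, Real.mul_rpow (by norm_num) (Real.rpow_nonneg ha _), ← Real.rpow_mul ha,
      mul_one_div, div_self hr.ne', Real.rpow_one]

lemma tendsto_ratio {n : ℕ} {lam : ℝ} (hlam : 0 < lam) :
    Filter.Tendsto (fun ε : ℝ =>
      (Real.exp (lam * ε) - Real.exp (-(lam * ε))) /
        ((Real.exp (lam * ε) + Real.exp (-(lam * ε))
            + ((n - 2 : ℕ) : ℝ) * Real.exp (-(lam * (1/ε)))) * (2 * ε)))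
      (nhdsWithin 0 (Set.Ioi 0)) (nhds (lam / 2)) := by
  set h : ℝ → ℝ := fun ε => Real.exp (lam * ε) - Real.exp (-(lam * ε)) with hh
  have H1 : HasDerivAt (fun ε : ℝ => Real.exp (lam * ε)) (Real.exp (lam * 0) * (lam * 1)) 0 :=
    (((hasDerivAt_id (0:ℝ)).const_mul lam)).exp
  have H2 : HasDerivAt (fun ε : ℝ => Real.exp (-(lam * ε))) (Real.exp (-(lam * 0)) * (-(lam * 1))) 0 :=
    (((hasDerivAt_id (0:ℝ)).const_mul lam).neg).exp
  have H : HasDerivAt h (2 * lam) 0 := by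
    have h12 := H1.sub H2
    have he : Real.exp (lam * 0) * (lam * 1) - Real.exp (-(lam * 0)) * -(lam * 1) = 2 * lam := by
      simp
      ring
    exact he ▸ h12
  have hslope : Filter.Tendsto (fun ε => h ε / ε) (nhdsWithin 0 {(0:ℝ)}ᶜ) (nhds (2 * lam)) := by
    have := hasDerivAt_iff_tendsto_slope.mp H
    refine this.congr (fun ε => ?_)
    rw [slope_def_field]
    simp [hh, div_eq_mul_inv]
  have hslope' : Filter.Tendsto (fun ε => h ε / ε) (nhdsWithin 0 (Set.Ioi 0)) (nhds (2 * lam)) :=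
    hslope.mono_left (nhdsWithin_mono 0 (fun ε hε => ne_of_gt hε))
  have t1 : Filter.Tendsto (fun ε : ℝ => Real.exp (lam * ε)) (nhdsWithin 0 (Set.Ioi 0)) (nhds 1) := by
    have : Filter.Tendsto (fun ε : ℝ => Real.exp (lam * ε)) (nhds 0) (nhds (Real.exp (lam * 0))) :=
      (Real.continuous_exp.comp (continuous_const.mul continuous_id)).tendsto 0
    simpa using this.mono_left nhdsWithin_le_nhds
  have t2 : Filter.Tendsto (fun ε : ℝ => Real.exp (-(lam * ε))) (nhdsWithin 0 (Set.Ioi 0)) (nhds 1) := by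
    have : Filter.Tendsto (fun ε : ℝ => Real.exp (-(lam * ε))) (nhds 0) (nhds (Real.exp (-(lam * 0)))) :=
      (Real.continuous_exp.comp ((continuous_const.mul continuous_id).neg)).tendsto 0
    simpa using this.mono_left nhdsWithin_le_nhds
  have t3 : Filter.Tendsto (fun ε : ℝ => Real.exp (-(lam * (1/ε)))) (nhdsWithin 0 (Set.Ioi 0)) (nhds 0) := by
    apply Real.tendsto_exp_atBot.comp
    apply Filter.tendsto_neg_atTop_atBot.comp
    have : Filter.Tendsto (fun ε : ℝ => ε⁻¹) (nhdsWithin 0 (Set.Ioi 0)) Filter.atTop :=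
      tendsto_inv_nhdsGT_zero
    have := this.const_mul_atTop hlam
    refine this.congr (fun ε => by rw [one_div])
  have hZ : Filter.Tendsto (fun ε : ℝ => Real.exp (lam * ε) + Real.exp (-(lam * ε))
      + ((n - 2 : ℕ) : ℝ) * Real.exp (-(lam * (1/ε)))) (nhdsWithin 0 (Set.Ioi 0)) (nhds 2) := by
    have h' := (t1.add t2).add (t3.const_mul ((n - 2 : ℕ) : ℝ))
    norm_num at h'
    exact h'.congr fun ε => by rw [one_div]
  have hmain : Filter.Tendsto (fun ε : ℝ => (h ε / ε) / (2 * (Real.exp (lam * ε) + Real.exp (-(lam * ε))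
      + ((n - 2 : ℕ) : ℝ) * Real.exp (-(lam * (1/ε)))))) (nhdsWithin 0 (Set.Ioi 0))
      (nhds ((2 * lam) / (2 * 2))) :=
    hslope'.div (hZ.const_mul 2) (by norm_num)
  have heq : (2 * lam) / (2 * 2) = lam / 2 := by ring
  rw [← heq]
  refine hmain.congr' ?_
  filter_upwards [self_mem_nhdsWithin] with ε hε
  rw [div_div]
  congr 1
  ring

lemma ratio_eq {n : ℕ} [NeZero n] (hn : 2 ≤ n) {lam ε : ℝ} (hlam : 0 < lam) (hε : 0 < ε)
    (p : ℝ≥0∞) (hp : 1 ≤ p) :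
    ∃ x y : Fin n → ℝ, x ≠ y ∧
      lpNorm p (softmax lam x - softmax lam y) / lpNorm p (x - y)
        = (Real.exp (lam * ε) - Real.exp (-(lam * ε))) /
            ((Real.exp (lam * ε) + Real.exp (-(lam * ε))
              + ((n - 2 : ℕ) : ℝ) * Real.exp (-(lam * (1/ε)))) * (2 * ε)) := by
  have h01 : (0 : Fin n) ≠ 1 := fin_zero_ne_one hn
  set A := Real.exp (lam * ε) with hA
  set B := Real.exp (-(lam * ε)) with hB
  set C := Real.exp (-(lam * (1/ε))) with hC
  set Z := A + B + ((n - 2 : ℕ) : ℝ) * C with hZ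
  have hZpos : 0 < Z := by
    have : (0:ℝ) ≤ ((n - 2 : ℕ) : ℝ) * C := by positivity
    have hA0 : 0 < A := Real.exp_pos _
    have hB0 : 0 < B := Real.exp_pos _
    linarith
  set x : Fin n → ℝ := fun i => if i = 0 then ε else if i = 1 then -ε else -(1/ε) with hx
  set y : Fin n → ℝ := fun i => if i = 0 then -ε else if i = 1 then ε else -(1/ε) with hy
  refine ⟨x, y, ?_, ?_⟩
  · intro hc
    have h0 := congrFun hc 0
    simp only [hx, hy, if_pos rfl] at h0
    linarith
  have hex : ∀ j : Fin n, Real.exp (lam * x j) = if j = 0 then A else if j = 1 then B else C := by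
    intro j
    simp only [hx]
    split_ifs
    · rfl
    · rw [hB, mul_neg]
    · rw [hC, mul_neg]
  have hey : ∀ j : Fin n, Real.exp (lam * y j) = if j = 0 then B else if j = 1 then A else C := by
    intro j
    simp only [hy]
    split_ifs
    · rw [hB, mul_neg]
    · rfl
    · rw [hC, mul_neg]
  have hZx : ∑ j, Real.exp (lam * x j) = Z := by
    rw [Finset.sum_congr rfl (fun j _ => hex j), sum_ite01 hn]
  have hZy : ∑ j, Real.exp (lam * y j) = Z := by
    rw [Finset.sum_congr rfl (fun j _ => hey j), sum_ite01 hn, hZ]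
    ring
  have hdiff : softmax lam x - softmax lam y
      = fun i : Fin n => if i = 0 then (A - B)/Z else if i = 1 then -((A - B)/Z) else 0 := by
    funext i
    rw [Pi.sub_apply]
    simp only [softmax, hZx, hZy, hex i, hey i]
    split_ifs
    · rw [div_sub_div_same]
    · rw [div_sub_div_same]; ring
    · rw [sub_self]
  have hsub : x - y = fun i : Fin n => if i = 0 then 2*ε else if i = 1 then -(2*ε) else 0 := by
    funext i
    rw [Pi.sub_apply]
    simp only [hx, hy]
    split_ifs <;> ring
  have hAB : 0 ≤ (A - B)/Z := by
    apply div_nonneg _ hZpos.le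
    rw [sub_nonneg, hA, hB]
    apply Real.exp_le_exp.2
    nlinarith
  have h2e : (0:ℝ) ≤ 2*ε := by linarith
  rw [hdiff, hsub, lpNorm_pair hn p hp hAB, lpNorm_pair hn p hp h2e]
  have hcp : (if p = ⊤ then (1:ℝ) else 2 ^ (1 / p.toReal)) ≠ 0 := by
    split_ifs
    · norm_num
    · positivity
  rw [mul_div_mul_left _ _ hcp, div_div]


/-- the ℓ_p Lipschitz constant of softmax with inverse temperature lam is
exactly lam/2, for all n ≥ 2 and 1 ≤ p ≤ ∞. -/
theorem softmax_lipschitz_constant_eq {n : ℕ} (hn : 2 ≤ n) (lam : ℝ) (hlam : 0 < lam)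
    (p : ℝ≥0∞) (hp : 1 ≤ p) :
    (⨆ xy : {xy : (Fin n → ℝ) × (Fin n → ℝ) // xy.1 ≠ xy.2},
        lpNorm p (softmax lam xy.val.1 - softmax lam xy.val.2) /
          lpNorm p (xy.val.1 - xy.val.2)) = lam / 2 := by
  haveI : NeZero n := ⟨by omega⟩
  haveI : Fact (1 ≤ p) := ⟨hp⟩
  set ratio : {xy : (Fin n → ℝ) × (Fin n → ℝ) // xy.1 ≠ xy.2} → ℝ := fun z =>
    lpNorm p (softmax lam z.val.1 - softmax lam z.val.2) / lpNorm p (z.val.1 - z.val.2)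
    with hratio
  haveI hne : Nonempty {xy : (Fin n → ℝ) × (Fin n → ℝ) // xy.1 ≠ xy.2} :=
    ⟨⟨((fun _ => 0), (fun _ => 1)), by
      intro hcontra
      have := congrFun hcontra 0
      norm_num at this⟩⟩
  have hub : ∀ z, ratio z ≤ lam / 2 := by
    rintro ⟨⟨x, y⟩, hxy⟩
    have hsub : x - y ≠ 0 := sub_ne_zero.2 hxy
    have hpos : 0 < lpNorm p (x - y) := by
      rw [lpNorm_eq_norm, norm_pos_iff]
      exact fun hc => hsub ((WithLp.toLp_eq_zero p).1 hc)
    rw [hratio]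
    dsimp only
    rw [div_le_iff₀ hpos]
    exact softmax_lip hlam hp x y
  have hbdd : BddAbove (Set.range ratio) := ⟨lam/2, by rintro r ⟨z, rfl⟩; exact hub z⟩
  apply le_antisymm (ciSup_le hub)
  have key : ∀ ε : ℝ, ε ∈ Set.Ioi (0:ℝ) →
      (Real.exp (lam * ε) - Real.exp (-(lam * ε))) /
        ((Real.exp (lam * ε) + Real.exp (-(lam * ε))
          + ((n - 2 : ℕ) : ℝ) * Real.exp (-(lam * (1/ε)))) * (2 * ε)) ≤ ⨆ z, ratio z := by
    intro ε hε
    obtain ⟨x, y, hxy, heq⟩ := ratio_eq hn hlam hε p hp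
    rw [← heq]
    exact le_ciSup hbdd ⟨(x, y), hxy⟩
  exact le_of_tendsto (tendsto_ratio hlam)
    (Filter.eventually_of_mem self_mem_nhdsWithin key)
end

section
/- Let n > 2, let 1 < p < ∞, and let s ∈ Δₙ be a point of the probability simplex whose support has size greater than 2 (i.e., more than two coordinates are nonzero) and which satisfies s_i = 1/2 for some index i. Then the interpolation inequality is strict for M(s) = Diag(s) − s sᵀ: ‖M(s)‖_p < ‖M(s)‖₁^{1/p} ‖M(s)‖_∞^{1 − 1/p} = 1/2. -/
open scoped ENNReal BigOperators

open Finset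
lemma lpNorm_top {n : ℕ} (x : Fin n → ℝ) : lpNorm ⊤ x = ⨆ i, |x i| := by simp [lpNorm]

lemma lpNorm_one {n : ℕ} (x : Fin n → ℝ) : lpNorm 1 x = ∑ i, |x i| := by
  simp [lpNorm]

lemma lpNorm_ne_top {n : ℕ} {p : ℝ≥0∞} (hp : p ≠ ⊤) (x : Fin n → ℝ) :
    lpNorm p x = (∑ i, |x i| ^ p.toReal) ^ (1 / p.toReal) := by simp [lpNorm, hp]

lemma lpNorm_pos {n : ℕ} {p : ℝ≥0∞} (hp : p ≠ ⊤)
    {x : Fin n → ℝ} (hx : x ≠ 0) : 0 < lpNorm p x := by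
  rw [lpNorm_ne_top hp]
  apply Real.rpow_pos_of_pos
  obtain ⟨i, hi⟩ : ∃ i, x i ≠ 0 := by
    by_contra h; push_neg at h; exact hx (funext h)
  exact Finset.sum_pos' (fun j _ => Real.rpow_nonneg (abs_nonneg _) _)
    ⟨i, Finset.mem_univ i, Real.rpow_pos_of_pos (abs_pos.2 hi) _⟩

lemma lpNorm_top_pos {n : ℕ} {x : Fin n → ℝ} (hx : x ≠ 0) : 0 < lpNorm ⊤ x := by
  obtain ⟨i, hi⟩ : ∃ i, x i ≠ 0 := by
    by_contra h; push_neg at h; exact hx (funext h)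
  rw [lpNorm_top]
  have : |x i| ≤ ⨆ j, |x j| := le_ciSup (f := fun j => |x j|) (Set.Finite.bddAbove (Set.finite_range _)) i
  exact lt_of_lt_of_le (abs_pos.2 hi) this

lemma jac_apply {n : ℕ} (s : Fin n → ℝ) (i j : Fin n) :
    softmaxJac s i j = (if i = j then s i else 0) - s i * s j := by
  simp [softmaxJac, Matrix.diagonal_apply, Matrix.vecMulVec_apply, Matrix.sub_apply]

lemma jac_abs {n : ℕ} {s : Fin n → ℝ} (h0 : ∀ i, 0 ≤ s i) (h1 : ∀ i, s i ≤ 1) (i j : Fin n) :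
    |softmaxJac s i j| = if i = j then s i * (1 - s i) else s i * s j := by
  rcases eq_or_ne i j with rfl | hij
  · rw [jac_apply, if_pos rfl, if_pos rfl, abs_of_nonneg (by nlinarith [h0 i, h1 i])]; ring
  · rw [jac_apply, if_neg hij, if_neg hij, zero_sub, abs_neg,
      abs_of_nonneg (mul_nonneg (h0 i) (h0 j))]

lemma jac_abs_symm {n : ℕ} {s : Fin n → ℝ} (h0 : ∀ i, 0 ≤ s i) (h1 : ∀ i, s i ≤ 1)
    (i j : Fin n) : |softmaxJac s i j| = |softmaxJac s j i| := by
  rw [jac_abs h0 h1, jac_abs h0 h1]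
  rcases eq_or_ne i j with rfl | hij
  · simp
  · rw [if_neg hij, if_neg (Ne.symm hij), mul_comm]

lemma jac_rowsum {n : ℕ} {s : Fin n → ℝ} (h0 : ∀ i, 0 ≤ s i) (h1 : ∀ i, s i ≤ 1)
    (hsum : ∑ i, s i = 1) (i : Fin n) :
    ∑ j, |softmaxJac s i j| = 2 * (s i * (1 - s i)) := by
  rw [← Finset.add_sum_erase _ _ (Finset.mem_univ i)]
  have h2 : ∑ j ∈ Finset.univ.erase i, |softmaxJac s i j|
      = ∑ j ∈ Finset.univ.erase i, s i * s j := by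
    refine Finset.sum_congr rfl fun j hj => ?_
    rw [jac_abs h0 h1, if_neg (Ne.symm (Finset.ne_of_mem_erase hj))]
  have he : ∑ j ∈ Finset.univ.erase i, s j = 1 - s i := by
    have h3 := Finset.add_sum_erase Finset.univ s (Finset.mem_univ i)
    rw [hsum] at h3; linarith
  rw [h2, ← Finset.mul_sum, he, jac_abs h0 h1, if_pos rfl]; ring

lemma jac_colsum {n : ℕ} {s : Fin n → ℝ} (h0 : ∀ i, 0 ≤ s i) (h1 : ∀ i, s i ≤ 1)
    (hsum : ∑ i, s i = 1) (j : Fin n) :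
    ∑ i, |softmaxJac s i j| = 2 * (s j * (1 - s j)) := by
  rw [← jac_rowsum h0 h1 hsum j]
  exact Finset.sum_congr rfl fun i _ => jac_abs_symm h0 h1 i j

lemma nonempty_ne_zero {m : ℕ} (hm : 0 < m) : Nonempty {v : Fin m → ℝ // v ≠ 0} :=
  ⟨⟨fun _ => 1, fun h => by simpa using congrFun h ⟨0, hm⟩⟩⟩

lemma opNorm_le {n m : ℕ} (hm : 0 < m) (p : ℝ≥0∞) (A : Matrix (Fin n) (Fin m) ℝ) (c : ℝ)
    (hpos : ∀ v : Fin m → ℝ, v ≠ 0 → 0 < lpNorm p v)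
    (h : ∀ v : Fin m → ℝ, v ≠ 0 → lpNorm p (A.mulVec v) ≤ c * lpNorm p v) :
    opNorm p A ≤ c := by
  haveI := nonempty_ne_zero hm
  apply ciSup_le
  rintro ⟨v, hv⟩
  rw [div_le_iff₀ (hpos v hv)]
  exact h v hv

lemma le_opNorm {n m : ℕ} (p : ℝ≥0∞) (A : Matrix (Fin n) (Fin m) ℝ) {c : ℝ}
    (hub : ∀ w : {v : Fin m → ℝ // v ≠ 0}, lpNorm p (A.mulVec w.1) / lpNorm p w.1 ≤ c)
    (v : {v : Fin m → ℝ // v ≠ 0}) :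
    lpNorm p (A.mulVec v.1) / lpNorm p v.1 ≤ opNorm p A :=
  le_ciSup (f := fun w : {v : Fin m → ℝ // v ≠ 0} => lpNorm p (A.mulVec w.1) / lpNorm p w.1)
    ⟨c, by rintro x ⟨w, rfl⟩; exact hub w⟩ v

lemma mulVec_abs_le {n : ℕ} (A : Matrix (Fin n) (Fin n) ℝ) (v : Fin n → ℝ) (i : Fin n) :
    |A.mulVec v i| ≤ ∑ j, |A i j| * |v j| := by
  rw [Matrix.mulVec, dotProduct]
  exact (Finset.abs_sum_le_sum_abs _ _).trans (le_of_eq (by simp [abs_mul]))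

lemma l1_ub {n : ℕ} {s : Fin n → ℝ} (h0 : ∀ i, 0 ≤ s i) (h1 : ∀ i, s i ≤ 1)
    (hsum : ∑ i, s i = 1) (v : Fin n → ℝ) :
    lpNorm 1 ((softmaxJac s).mulVec v) ≤ (1/2) * lpNorm 1 v := by
  rw [lpNorm_one, lpNorm_one, Finset.mul_sum]
  calc ∑ i, |(softmaxJac s).mulVec v i| ≤ ∑ i, ∑ j, |softmaxJac s i j| * |v j| :=
        Finset.sum_le_sum fun i _ => mulVec_abs_le _ _ i
    _ = ∑ j, (∑ i, |softmaxJac s i j|) * |v j| := by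
        rw [Finset.sum_comm]; exact Finset.sum_congr rfl fun j _ => (Finset.sum_mul ..).symm
    _ ≤ ∑ j, (1/2) * |v j| := by
        refine Finset.sum_le_sum fun j _ => ?_
        rw [jac_colsum h0 h1 hsum]
        exact mul_le_mul_of_nonneg_right (by nlinarith [h0 j, h1 j, sq_nonneg (2 * s j - 1)]) (abs_nonneg _)

lemma linf_ub {n : ℕ} (hn : 0 < n) {s : Fin n → ℝ} (h0 : ∀ i, 0 ≤ s i) (h1 : ∀ i, s i ≤ 1)
    (hsum : ∑ i, s i = 1) (v : Fin n → ℝ) :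
    lpNorm ⊤ ((softmaxJac s).mulVec v) ≤ (1/2) * lpNorm ⊤ v := by
  haveI : Nonempty (Fin n) := ⟨⟨0, hn⟩⟩
  rw [lpNorm_top, lpNorm_top]
  set N := ⨆ j, |v j| with hN
  have hvN : ∀ j, |v j| ≤ N := fun j =>
    le_ciSup (f := fun j => |v j|) (Set.Finite.bddAbove (Set.finite_range _)) j
  have hN0 : 0 ≤ N := le_trans (abs_nonneg _) (hvN ⟨0, hn⟩)
  apply ciSup_le
  intro i
  calc |(softmaxJac s).mulVec v i| ≤ ∑ j, |softmaxJac s i j| * |v j| := mulVec_abs_le _ _ i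
    _ ≤ ∑ j, |softmaxJac s i j| * N :=
        Finset.sum_le_sum fun j _ => mul_le_mul_of_nonneg_left (hvN j) (abs_nonneg _)
    _ = (2 * (s i * (1 - s i))) * N := by rw [← Finset.sum_mul, jac_rowsum h0 h1 hsum]
    _ ≤ (1/2) * N := mul_le_mul_of_nonneg_right (by nlinarith [h0 i, h1 i, sq_nonneg (2 * s i - 1)]) hN0

lemma opNorm_one_eq {n : ℕ} (hn : 0 < n) {s : Fin n → ℝ} (h0 : ∀ i, 0 ≤ s i)
    (h1 : ∀ i, s i ≤ 1) (hsum : ∑ i, s i = 1) {k : Fin n} (hk : s k = 1/2) :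
    opNorm 1 (softmaxJac s) = 1/2 := by
  haveI := nonempty_ne_zero hn
  have hpos : ∀ v : Fin n → ℝ, v ≠ 0 → 0 < lpNorm 1 v :=
    fun v hv => lpNorm_pos (p := 1) (by simp) hv
  have hub : ∀ w : {v : Fin n → ℝ // v ≠ 0},
      lpNorm 1 ((softmaxJac s).mulVec w.1) / lpNorm 1 w.1 ≤ 1/2 := by
    rintro ⟨w, hw⟩
    rw [div_le_iff₀ (hpos w hw)]
    exact l1_ub h0 h1 hsum w
  refine le_antisymm (ciSup_le hub) ?_
  have hek : (Pi.single k 1 : Fin n → ℝ) ≠ 0 := by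
    intro h; have := congrFun h k; simp at this
  have h2 : lpNorm 1 ((softmaxJac s).mulVec (Pi.single k 1)) = 1/2 := by
    rw [lpNorm_one, Matrix.mulVec_single]
    simp only [MulOpposite.op_one, one_smul, Matrix.col_apply]
    rw [jac_colsum h0 h1 hsum, hk]; norm_num
  have h3 : lpNorm 1 (Pi.single k 1 : Fin n → ℝ) = 1 := by
    rw [lpNorm_one]
    rw [Finset.sum_eq_single k (fun j _ hj => by simp [Pi.single_apply, hj]) (by simp)]
    simp
  have := le_opNorm 1 (softmaxJac s) hub ⟨Pi.single k 1, hek⟩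
  rw [h2, h3] at this
  simpa using this

lemma opNorm_top_eq {n : ℕ} (hn : 0 < n) {s : Fin n → ℝ} (h0 : ∀ i, 0 ≤ s i)
    (h1 : ∀ i, s i ≤ 1) (hsum : ∑ i, s i = 1) {k : Fin n} (hk : s k = 1/2) :
    opNorm ⊤ (softmaxJac s) = 1/2 := by
  haveI := nonempty_ne_zero hn
  haveI : Nonempty (Fin n) := ⟨⟨0, hn⟩⟩
  have hpos : ∀ v : Fin n → ℝ, v ≠ 0 → 0 < lpNorm ⊤ v := fun v hv => lpNorm_top_pos hv
  have hub : ∀ w : {v : Fin n → ℝ // v ≠ 0},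
      lpNorm ⊤ ((softmaxJac s).mulVec w.1) / lpNorm ⊤ w.1 ≤ 1/2 := by
    rintro ⟨w, hw⟩
    rw [div_le_iff₀ (hpos w hw)]
    exact linf_ub hn h0 h1 hsum w
  refine le_antisymm (ciSup_le hub) ?_
  set w : Fin n → ℝ := fun j => if j = k then 1 else -1 with hw
  have hwne : w ≠ 0 := by
    intro h; have := congrFun h k; simp [hw] at this
  have hw1 : lpNorm ⊤ w = 1 := by
    rw [lpNorm_top]
    have : (fun j => |w j|) = fun _ => (1:ℝ) := by
      funext j
      rcases eq_or_ne j k with rfl | hj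
      · simp [hw]
      · simp [hw, hj]
    rw [this, ciSup_const]
  have hAk : (softmaxJac s).mulVec w k = 1/2 := by
    rw [Matrix.mulVec, dotProduct]
    have : ∀ j, softmaxJac s k j * w j = |softmaxJac s k j| := by
      intro j
      rcases eq_or_ne j k with rfl | hj
      · simp only [hw, if_pos rfl, mul_one]
        rw [jac_abs h0 h1, if_pos rfl, jac_apply, if_pos rfl]; ring
      · rw [hw]; simp only [if_neg hj]
        rw [jac_abs h0 h1, if_neg (Ne.symm hj), jac_apply, if_neg (Ne.symm hj), zero_sub]
        ring
    rw [Finset.sum_congr rfl fun j _ => this j, jac_rowsum h0 h1 hsum, hk]; norm_num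
  have h2 : lpNorm ⊤ ((softmaxJac s).mulVec w) = 1/2 := by
    refine le_antisymm (by simpa [hw1] using linf_ub hn h0 h1 hsum w) ?_
    rw [lpNorm_top]
    calc (1/2 : ℝ) = |(softmaxJac s).mulVec w k| := by
          rw [hAk, abs_of_nonneg (by norm_num : (0:ℝ) ≤ 1/2)]
      _ ≤ ⨆ i, |(softmaxJac s).mulVec w i| :=
          le_ciSup (f := fun i => |(softmaxJac s).mulVec w i|)
            (Set.Finite.bddAbove (Set.finite_range _)) k
  have := le_opNorm ⊤ (softmaxJac s) hub ⟨w, hwne⟩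
  rw [h2, hw1] at this
  simpa using this

lemma opNorm_lt {n : ℕ} (hn : 0 < n) {p : ℝ≥0∞} (hp1 : 1 < p) (hp2 : p ≠ ⊤)
    {s : Fin n → ℝ} (h0 : ∀ i, 0 ≤ s i) (h1 : ∀ i, s i ≤ 1) (hsum : ∑ i, s i = 1)
    {k : Fin n} (hk : s k = 1/2)
    (hlt : ∀ j, j ≠ k → s j < 1/2)
    (hex : ∃ i, i ≠ k ∧ 0 < s i) :
    opNorm p (softmaxJac s) < 1/2 := by
  haveI : Nonempty (Fin n) := ⟨⟨0, hn⟩⟩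
  set pr := p.toReal with hprdef
  have hpr : 1 < pr := by
    have := (ENNReal.toReal_lt_toReal (by simp) hp2).2 hp1
    simpa using this
  have hpr0 : (0:ℝ) < pr := by linarith
  have hprne : pr ≠ 0 := ne_of_gt hpr0
  set A := softmaxJac s with hA
  set R : Fin n → ℝ := fun i => 2 * (s i * (1 - s i)) with hR
  have hR0 : ∀ i, 0 ≤ R i := fun i => by
    have := h0 i; have := h1 i; simp only [hR]; nlinarith
  have hRle : ∀ i, R i ≤ 1/2 := fun i => by
    have := h0 i; have := h1 i; simp only [hR]; nlinarith [sq_nonneg (2 * s i - 1)]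
  have hpow_le : ∀ i, R i ^ (pr - 1) ≤ (1/2:ℝ) ^ (pr - 1) := fun i =>
    Real.rpow_le_rpow (hR0 i) (hRle i) (by linarith)
  have hhalfpow : (1/2:ℝ) ^ pr = (1/2:ℝ) ^ (pr - 1) * (1/2) := by
    rw [← Real.rpow_add_one (by norm_num : (1/2:ℝ) ≠ 0) (pr - 1), sub_add_cancel]
  set c : Fin n → ℝ := fun j => ∑ i, R i ^ (pr - 1) * |A i j| with hc
  have hc0 : ∀ j, 0 ≤ c j := fun j =>
    Finset.sum_nonneg fun i _ => mul_nonneg (Real.rpow_nonneg (hR0 i) _) (abs_nonneg _)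
  -- each column strictly below (1/2)^pr
  have hcol : ∀ j, c j < (1/2:ℝ) ^ pr := by
    intro j
    rcases eq_or_ne j k with rfl | hjk
    · -- column k
      obtain ⟨i0, hi0k, hi0⟩ := hex
      have hsume : ∑ i ∈ Finset.univ.erase j, s i = 1/2 := by
        have h3 := Finset.add_sum_erase Finset.univ s (Finset.mem_univ j)
        rw [hsum, hk] at h3; linarith
      have hcj : c j = ∑ i, R i ^ (pr - 1) * |A i j| := by simp only [hc]
      rw [hcj, ← Finset.add_sum_erase _ _ (Finset.mem_univ j)]
      have hterm : ∀ i ∈ Finset.univ.erase j, R i ^ (pr - 1) * |A i j|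
          = R i ^ (pr - 1) * (s i * (1/2)) := by
        intro i hi
        rw [hA, jac_abs h0 h1, if_neg (Finset.ne_of_mem_erase hi), hk]
      rw [Finset.sum_congr rfl hterm]
      have hAkk : |A j j| = 1/4 := by
        rw [hA, jac_abs h0 h1, if_pos rfl, hk]; norm_num
      have hRk : R j = 1/2 := by simp only [hR]; rw [hk]; norm_num
      have hstrict : ∑ i ∈ Finset.univ.erase j, R i ^ (pr - 1) * (s i * (1/2))
          < ∑ i ∈ Finset.univ.erase j, (1/2:ℝ) ^ (pr - 1) * (s i * (1/2)) := by
        refine Finset.sum_lt_sum (fun i _ => mul_le_mul_of_nonneg_right (hpow_le i)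
          (by have := h0 i; linarith)) ⟨i0, Finset.mem_erase.2 ⟨hi0k, Finset.mem_univ i0⟩, ?_⟩
        have hRi0 : R i0 < 1/2 := by
          have := hlt i0 hi0k; simp only [hR]; nlinarith
        exact mul_lt_mul_of_pos_right
          (Real.rpow_lt_rpow (hR0 i0) hRi0 (by linarith)) (by linarith)
      have hrhs : ∑ i ∈ Finset.univ.erase j, (1/2:ℝ) ^ (pr - 1) * (s i * (1/2))
          = (1/2:ℝ) ^ (pr - 1) * (1/4) := by
        rw [← Finset.mul_sum, ← Finset.sum_mul (Finset.univ.erase j) s (1/2:ℝ)]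
        rw [hsume]; ring
      rw [hAkk, hRk]
      rw [hrhs] at hstrict
      have : (1/2:ℝ) ^ (pr - 1) * (1/4) + (1/2:ℝ) ^ (pr - 1) * (1/4) = (1/2:ℝ) ^ pr := by
        rw [hhalfpow]; ring
      linarith
    · -- other columns
      have hcj : c j ≤ (1/2:ℝ) ^ (pr - 1) * (2 * (s j * (1 - s j))) := by
        have hcj' : c j = ∑ i, R i ^ (pr - 1) * |A i j| := by simp only [hc]
        rw [hcj']
        calc ∑ i, R i ^ (pr - 1) * |A i j| ≤ ∑ i, (1/2:ℝ) ^ (pr - 1) * |A i j| :=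
              Finset.sum_le_sum fun i _ =>
                mul_le_mul_of_nonneg_right (hpow_le i) (abs_nonneg _)
          _ = (1/2:ℝ) ^ (pr - 1) * (2 * (s j * (1 - s j))) := by
              rw [← Finset.mul_sum, hA, jac_colsum h0 h1 hsum]
      have hsj : 2 * (s j * (1 - s j)) < 1/2 := by
        have := h0 j; have := hlt j hjk; nlinarith
      have := mul_lt_mul_of_pos_left hsj
        (Real.rpow_pos_of_pos (by norm_num : (0:ℝ) < 1/2) (pr - 1))
      rw [hhalfpow]
      linarith
  set C : ℝ := Finset.univ.sup' Finset.univ_nonempty c with hCdef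
  have hCj : ∀ j, c j ≤ C := fun j => Finset.le_sup' c (Finset.mem_univ j)
  have hC0 : 0 ≤ C := le_trans (hc0 ⟨0, hn⟩) (hCj ⟨0, hn⟩)
  have hClt : C < (1/2:ℝ) ^ pr :=
    (Finset.sup'_lt_iff Finset.univ_nonempty).2 fun j _ => hcol j
  -- main bound
  have hbound : ∀ v : Fin n → ℝ, v ≠ 0 →
      lpNorm p (A.mulVec v) ≤ C ^ (1/pr) * lpNorm p v := by
    intro v hv
    have key : ∀ i, |A.mulVec v i| ^ pr ≤ R i ^ (pr - 1) * ∑ j, |A i j| * |v j| ^ pr := by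
      intro i
      have h1' : |A.mulVec v i| ≤ ∑ j, |A i j| * |v j| := mulVec_abs_le _ _ i
      have h2' : ∑ j, |A i j| * |v j| ≤
          (∑ j, |A i j|) ^ (1 - pr⁻¹) * (∑ j, |A i j| * |v j| ^ pr) ^ pr⁻¹ :=
        Real.inner_le_weight_mul_Lp_of_nonneg Finset.univ (le_of_lt hpr) _ _
          (fun j => abs_nonneg _) (fun j => abs_nonneg _)
      have hS0 : 0 ≤ ∑ j, |A i j| * |v j| ^ pr :=
        Finset.sum_nonneg fun j _ => mul_nonneg (abs_nonneg _) (Real.rpow_nonneg (abs_nonneg _) _)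
      have hRsum : ∑ j, |A i j| = R i := by rw [hA, jac_rowsum h0 h1 hsum]
      calc |A.mulVec v i| ^ pr
          ≤ ((∑ j, |A i j|) ^ (1 - pr⁻¹) * (∑ j, |A i j| * |v j| ^ pr) ^ pr⁻¹) ^ pr :=
            Real.rpow_le_rpow (abs_nonneg _) (h1'.trans h2') (le_of_lt hpr0)
        _ = R i ^ (pr - 1) * ∑ j, |A i j| * |v j| ^ pr := by
            have hXnn : 0 ≤ ∑ j, |A i j| := Finset.sum_nonneg fun j _ => abs_nonneg _
            rw [Real.mul_rpow (Real.rpow_nonneg hXnn _) (Real.rpow_nonneg hS0 _),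
              ← Real.rpow_mul hXnn, ← Real.rpow_mul hS0]
            have e1 : (1 - pr⁻¹) * pr = pr - 1 := by field_simp
            have e2 : pr⁻¹ * pr = 1 := inv_mul_cancel₀ hprne
            rw [e1, e2, Real.rpow_one, hRsum]
    have hsum1 : ∑ i, |A.mulVec v i| ^ pr ≤ C * ∑ j, |v j| ^ pr := by
      calc ∑ i, |A.mulVec v i| ^ pr ≤ ∑ i, R i ^ (pr-1) * ∑ j, |A i j| * |v j| ^ pr :=
            Finset.sum_le_sum fun i _ => key i
        _ = ∑ j, c j * |v j| ^ pr := by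
            simp_rw [Finset.mul_sum]
            rw [Finset.sum_comm]
            refine Finset.sum_congr rfl fun j _ => ?_
            simp only [hc]
            rw [Finset.sum_mul]
            exact Finset.sum_congr rfl fun i _ => by ring
        _ ≤ ∑ j, C * |v j| ^ pr := Finset.sum_le_sum fun j _ =>
            mul_le_mul_of_nonneg_right (hCj j) (Real.rpow_nonneg (abs_nonneg _) _)
        _ = C * ∑ j, |v j| ^ pr := (Finset.mul_sum _ _ _).symm
    rw [lpNorm_ne_top hp2, lpNorm_ne_top hp2, ← hprdef]
    calc (∑ i, |A.mulVec v i| ^ pr) ^ (1/pr)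
        ≤ (C * ∑ j, |v j| ^ pr) ^ (1/pr) :=
          Real.rpow_le_rpow (Finset.sum_nonneg fun i _ =>
            Real.rpow_nonneg (abs_nonneg _) _) hsum1 (by positivity)
      _ = C ^ (1/pr) * (∑ j, |v j| ^ pr) ^ (1/pr) :=
          Real.mul_rpow hC0 (Finset.sum_nonneg fun j _ => Real.rpow_nonneg (abs_nonneg _) _)
  have hle : opNorm p A ≤ C ^ (1/pr) :=
    opNorm_le hn p A _ (fun v hv => lpNorm_pos hp2 hv) hbound
  have hfin : C ^ (1/pr) < 1/2 := by
    have h2' : C ^ (1/pr) < ((1/2:ℝ) ^ pr) ^ (1/pr) :=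
      Real.rpow_lt_rpow hC0 hClt (by positivity)
    rwa [← Real.rpow_mul (by norm_num), mul_one_div_cancel hprne, Real.rpow_one] at h2'
  linarith

/-- for s in the simplex with support size > 2 and some coordinate equal to 1/2,
the interpolation inequality is strict for `M(s)`, with right-hand side equal to 1/2. -/
theorem strict_interpolation_large_support {n : ℕ} (hn : 2 < n)
    (p : ℝ≥0∞) (hp1 : 1 < p) (hp2 : p ≠ ⊤)
    (s : Fin n → ℝ) (hs : s ∈ probSimplex n)
    (hsupp : 2 < (Finset.univ.filter (fun i => s i ≠ 0)).card)
    (hhalf : ∃ i : Fin n, s i = 1 / 2) :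
    opNorm p (softmaxJac s) <
      opNorm 1 (softmaxJac s) ^ p⁻¹.toReal *
        opNorm ⊤ (softmaxJac s) ^ (1 - p⁻¹.toReal) ∧
    opNorm 1 (softmaxJac s) ^ p⁻¹.toReal *
        opNorm ⊤ (softmaxJac s) ^ (1 - p⁻¹.toReal) = 1 / 2 := by
  obtain ⟨h0, hsum⟩ := hs
  obtain ⟨k, hk⟩ := hhalf
  have hn' : 0 < n := by omega
  have h1 : ∀ i, s i ≤ 1 := fun i => by
    have := Finset.single_le_sum (fun j _ => h0 j) (Finset.mem_univ i)
    linarith [hsum ▸ this]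
  have hlt : ∀ j, j ≠ k → s j < 1/2 := by
    intro j hj
    by_contra h
    push_neg at h
    have hkj : k ≠ j := Ne.symm hj
    have hsumpair : ∑ i ∈ ({k, j} : Finset (Fin n)), s i = s k + s j :=
      Finset.sum_pair hkj
    have hpair : ({k, j} : Finset (Fin n)) ⊆ Finset.univ := Finset.subset_univ _
    have hple : ∑ i ∈ ({k, j} : Finset (Fin n)), s i ≤ 1 := by
      rw [← hsum]
      exact Finset.sum_le_sum_of_subset_of_nonneg hpair (fun i _ _ => h0 i)
    have hsj : s j = 1/2 := by rw [hsumpair, hk] at hple; linarith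
    have hrest : ∑ i ∈ Finset.univ \ ({k, j} : Finset (Fin n)), s i = 0 := by
      have := Finset.sum_sdiff_eq_sub (f := s) hpair
      rw [hsum, hsumpair, hk, hsj] at this
      rw [this]; norm_num
    have hzero : ∀ i ∈ Finset.univ \ ({k, j} : Finset (Fin n)), s i = 0 :=
      (Finset.sum_eq_zero_iff_of_nonneg (fun i _ => h0 i)).1 hrest
    have hsub : (Finset.univ.filter (fun i => s i ≠ 0)) ⊆ ({k, j} : Finset (Fin n)) := by
      intro i hi
      rcases Finset.mem_filter.1 hi with ⟨_, hne⟩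
      by_contra hmem
      exact hne (hzero i (Finset.mem_sdiff.2 ⟨Finset.mem_univ i, hmem⟩))
    have hcard := Finset.card_le_card hsub
    rw [Finset.card_pair hkj] at hcard
    omega
  have hex : ∃ i, i ≠ k ∧ 0 < s i := by
    have hnsub : ¬ (Finset.univ.filter (fun i => s i ≠ 0)) ⊆ ({k} : Finset (Fin n)) := by
      intro hsub
      have := Finset.card_le_card hsub
      rw [Finset.card_singleton] at this
      omega
    obtain ⟨i, hi, hik⟩ := Finset.not_subset.1 hnsub
    rcases Finset.mem_filter.1 hi with ⟨_, hne⟩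
    exact ⟨i, by simpa using hik, lt_of_le_of_ne (h0 i) (Ne.symm hne)⟩
  have e1 := opNorm_one_eq hn' h0 h1 hsum hk
  have etop := opNorm_top_eq hn' h0 h1 hsum hk
  have hrhs : opNorm 1 (softmaxJac s) ^ p⁻¹.toReal *
      opNorm ⊤ (softmaxJac s) ^ (1 - p⁻¹.toReal) = 1/2 := by
    rw [e1, etop, ← Real.rpow_add (by norm_num : (0:ℝ) < 1/2)]
    have : p⁻¹.toReal + (1 - p⁻¹.toReal) = 1 := by ring
    rw [this, Real.rpow_one]
  refine ⟨?_, hrhs⟩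
  rw [hrhs]
  exact opNorm_lt hn' hp1 hp2 h0 h1 hsum hk hlt hex
end
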